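/- Let σ be a 2-form on a (2n−1)-dimensional vector space V over a field K of characteristic 0, with rank σ = 2n−4, and let α₀, α₁ ∈ V* satisfy αᵢ ∧ σ^{n-2} ≠ 0 for i = 0,1 and α₁ ∧ α₀ ∧ σ^{n-2} = 0. Then there exists a nonzero scalar B ∈ K with α₁ ∧ σ^{n-2} = B · (α₀ ∧ σ^{n-2}). -/

import Mathlib

set_option synthInstance.maxHeartbeats 1000000
set_option maxHeartbeats 1000000

namespace Stmt3Aux

open ExteriorAlgebra

variable {K : Type*} [Field K] {M : Type*} [AddCommGroup M] [Module K M]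

local infixl:70 "⌋" => CliffordAlgebra.contractLeft (R := K) (M := M) (Q := 0)

lemma ι_mul_swap (x y : M) (z : ExteriorAlgebra K M) :
    ι K x * (ι K y * z) = -(ι K y * (ι K x * z)) := by
  have h : ι K x * ι K y = -(ι K y * ι K x) :=
    eq_neg_of_add_eq_zero_left (ExteriorAlgebra.ι_add_mul_swap x y)
  rw [← mul_assoc, h, neg_mul, ← mul_assoc]

lemma ι_mul_sq (x : M) (z : ExteriorAlgebra K M) :
    ι K x * (ι K x * z) = 0 := by
  rw [← mul_assoc, ι_sq_zero, zero_mul]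

lemma ctr_ι (c : Module.Dual K M) (a : M) : c⌋(ι K a) = c a • 1 := by
  have := CliffordAlgebra.contractLeft_ι_mul (Q := (0 : QuadraticForm K M)) c a 1
  simpa [CliffordAlgebra.contractLeft_one] using this

lemma ctr_ι_mul (c : Module.Dual K M) (a : M) (x : ExteriorAlgebra K M) :
    c⌋(ι K a * x) = c a • x - ι K a * (c⌋x) :=
  CliffordAlgebra.contractLeft_ι_mul c a x

lemma ctr_ι_ι (c : Module.Dual K M) (a b : M) :
    c⌋(ι K a * ι K b) = c a • ι K b - c b • ι K a := by
  rw [ctr_ι_mul, ctr_ι, mul_smul_comm, mul_one]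

/-- membership in `⋀[K]^2` as membership in a product of submodules -/
lemma mem_sq_iff (σ : ExteriorAlgebra K M) :
    σ ∈ ⋀[K]^2 M ↔ σ ∈ LinearMap.range (ι K (M := M)) * LinearMap.range (ι K (M := M)) := by
  rw [exteriorPower, pow_two]

section sigma

variable {σ : ExteriorAlgebra K M}
  (hσ : σ ∈ LinearMap.range (ι K (M := M)) * LinearMap.range (ι K (M := M)))

include hσ

lemma sq_comm (a : M) : σ * ι K a = ι K a * σ := by
  refine Submodule.mul_induction_on hσ ?_ ?_
  · rintro x ⟨u, rfl⟩ y ⟨v, rfl⟩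
    have h1 : ι K v * ι K a = -(ι K a * ι K v) :=
        eq_neg_of_add_eq_zero_left (ExteriorAlgebra.ι_add_mul_swap v a)
    have h2 : ι K u * ι K a = -(ι K a * ι K u) :=
      eq_neg_of_add_eq_zero_left (ExteriorAlgebra.ι_add_mul_swap u a)
    calc ι K u * ι K v * ι K a = ι K u * (ι K v * ι K a) := by rw [mul_assoc]
      _ = -(ι K u * ι K a) * ι K v := by rw [h1, mul_neg, neg_mul, mul_assoc]
      _ = ι K a * ι K u * ι K v := by rw [h2, neg_neg, mul_assoc, ← mul_assoc]
      _ = ι K a * (ι K u * ι K v) := by rw [mul_assoc]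
  · intro x y ihx ihy
    rw [add_mul, mul_add, ihx, ihy]

lemma ctr_sq_mem (c : Module.Dual K M) : ∃ m : M, ι K m = c⌋σ := by
  refine Submodule.mul_induction_on hσ ?_ ?_
  · rintro x ⟨u, rfl⟩ y ⟨v, rfl⟩
    exact ⟨c u • v - c v • u, by rw [ctr_ι_ι]; simp⟩
  · rintro x y ⟨m₁, h₁⟩ ⟨m₂, h₂⟩
    exact ⟨m₁ + m₂, by rw [map_add, h₁, h₂, map_add]⟩

lemma ctr_sq_mul (c : Module.Dual K M) (x : ExteriorAlgebra K M) :
    c⌋(σ * x) = (c⌋σ) * x + σ * (c⌋x) := by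
  refine Submodule.mul_induction_on (C := fun s => ∀ x, c⌋(s * x) = (c⌋s) * x + s * (c⌋x)) hσ ?_ ?_ x
  · rintro a ⟨u, rfl⟩ b ⟨v, rfl⟩ x
    rw [mul_assoc, ctr_ι_mul, ctr_ι_mul, ctr_ι_ι]
    simp only [mul_sub, mul_smul_comm, smul_mul_assoc, sub_mul, mul_assoc]
    abel
  · intro a b iha ihb x
    rw [add_mul, map_add, iha, ihb, map_add, add_mul, add_mul]
    abel

lemma ctr_antisymm (c d : Module.Dual K M) : c⌋(d⌋σ) = -(d⌋(c⌋σ)) := by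
  refine Submodule.mul_induction_on hσ ?_ ?_
  · rintro a ⟨u, rfl⟩ b ⟨v, rfl⟩
    rw [ctr_ι_ι, ctr_ι_ι, map_sub, map_sub, map_smul, map_smul, map_smul, map_smul,
      ctr_ι, ctr_ι, ctr_ι, ctr_ι]
    simp only [smul_smul]
    rw [← sub_smul, ← sub_smul, ← neg_smul]
    ring_nf
  · intro a b iha ihb
    rw [map_add, map_add, map_add, map_add, iha, ihb, neg_add]

lemma ctr_sq_pow (c : Module.Dual K M) (m : ℕ) :
    c⌋(σ ^ (m + 1)) = (m + 1) • ((c⌋σ) * σ ^ m) := by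
  induction m with
  | zero => simp
  | succ m ih =>
      have hcomm : σ * (c⌋σ) = (c⌋σ) * σ := by
        obtain ⟨w, hw⟩ := ctr_sq_mem hσ c
        rw [← hw, sq_comm hσ]
      calc c⌋(σ ^ (m + 2)) = c⌋(σ * σ ^ (m + 1)) := by rw [pow_succ']
        _ = (c⌋σ) * σ ^ (m + 1) + σ * (c⌋(σ ^ (m + 1))) := ctr_sq_mul hσ c _
        _ = (c⌋σ) * σ ^ (m + 1) + (m + 1) • (σ * ((c⌋σ) * σ ^ m)) := by
            rw [ih, mul_smul_comm]
        _ = (c⌋σ) * σ ^ (m + 1) + (m + 1) • ((c⌋σ) * σ ^ (m + 1)) := by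
            rw [← mul_assoc, hcomm, mul_assoc, ← pow_succ']
        _ = (m + 2) • ((c⌋σ) * σ ^ (m + 1)) := by
            rw [succ_nsmul ((c⌋σ) * σ ^ (m + 1)) (m + 1)]
            abel

end sigma

section findim

variable (K M)
variable [FiniteDimensional K M]

/-- The Euler (degree-counting) operator. -/
noncomputable def eulerOp : ExteriorAlgebra K M →ₗ[K] ExteriorAlgebra K M :=
  ∑ i, (LinearMap.mulLeft K (ι K (Module.finBasis K M i))) ∘ₗ
       (CliffordAlgebra.contractLeft (Q := (0 : QuadraticForm K M))
         ((Module.finBasis K M).coord i))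

variable {K M}

lemma eulerOp_apply (x : ExteriorAlgebra K M) :
    eulerOp K M x = ∑ i, ι K (Module.finBasis K M i) * ((Module.finBasis K M).coord i⌋x) := by
  simp [eulerOp]

lemma eulerOp_one : eulerOp K M (1 : ExteriorAlgebra K M) = 0 := by
  simp [eulerOp_apply, CliffordAlgebra.contractLeft_one]

lemma eulerOp_ι_mul (m : M) (x : ExteriorAlgebra K M) :
    eulerOp K M (ι K m * x) = ι K m * x + ι K m * eulerOp K M x := by
  set b := Module.finBasis K M
  rw [eulerOp_apply]
  have h1 : ∀ i, ι K (b i) * (b.coord i⌋(ι K m * x)) =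
      (b.coord i m) • (ι K (b i) * x) + ι K m * (ι K (b i) * (b.coord i⌋x)) := by
    intro i
    rw [ctr_ι_mul, mul_sub, mul_smul_comm, ι_mul_swap]
    abel
  rw [Finset.sum_congr rfl (fun i _ => h1 i), Finset.sum_add_distrib, ← Finset.mul_sum,
    ← eulerOp_apply]
  congr 1
  have : ∀ i ∈ Finset.univ, (b.coord i m) • (ι K (b i) * x) = ((b.coord i m) • ι K (b i)) * x := by
    intro i _
    rw [smul_mul_assoc]
  rw [Finset.sum_congr rfl this, ← Finset.sum_mul]
  congr 1
  calc ∑ i, (b.coord i m) • ι K (b i) = ∑ i, ι K ((b.coord i m) • b i) := by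
        simp only [map_smul]
    _ = ι K m := by
        rw [← map_sum]
        congr 1
        simpa [Module.Basis.coord_apply] using b.sum_repr m

lemma eulerOp_ιMulti (k : ℕ) (v : Fin k → M) :
    eulerOp K M (ιMulti K k v) = (k : K) • ιMulti K k v := by
  induction k with
  | zero => rw [ιMulti_zero_apply, eulerOp_one]; simp
  | succ k ih =>
      rw [ιMulti_succ_apply, eulerOp_ι_mul, ih (Matrix.vecTail v), mul_smul_comm]
      push_cast
      rw [add_smul, one_smul]
      abel

lemma eulerOp_on_power (k : ℕ) (x : ExteriorAlgebra K M) (hx : x ∈ ⋀[K]^k M) :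
    eulerOp K M x = (k : K) • x := by
  rw [← ιMulti_span_fixedDegree] at hx
  induction hx using Submodule.span_induction with
  | mem y hy => obtain ⟨v, rfl⟩ := hy; exact eulerOp_ιMulti k v
  | zero => simp
  | add y z _ _ ihy ihz => rw [map_add, ihy, ihz, smul_add]
  | smul c y _ ihy => rw [map_smul, ihy, smul_comm]

lemma coeuler_sum (x : ExteriorAlgebra K M) :
    ∑ i, ((Module.finBasis K M).coord i⌋(ι K (Module.finBasis K M i) * x)) =
      (Module.finrank K M : K) • x - eulerOp K M x := by
  set b := Module.finBasis K M
  have h1 : ∀ i, (b.coord i⌋(ι K (b i) * x)) =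
      (1 : K) • x - ι K (b i) * (b.coord i⌋x) := by
    intro i
    rw [ctr_ι_mul]
    congr 2
    simp [Module.Basis.coord_apply]
  rw [Finset.sum_congr rfl (fun i _ => h1 i), Finset.sum_sub_distrib, ← eulerOp_apply]
  congr 1
  rw [Finset.sum_const, Finset.card_univ, Fintype.card_fin, ← Nat.cast_smul_eq_nsmul K]
  simp

variable [CharZero K]

/-- co-Euler nondegeneracy: an element of `⋀^k` with `k ≠ dim` killed by all wedges vanishes. -/
lemma eq_zero_of_forall_ι_mul (k : ℕ) (x : ExteriorAlgebra K M) (hx : x ∈ ⋀[K]^k M)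
    (hk : k ≠ Module.finrank K M) (h : ∀ a : M, ι K a * x = 0) : x = 0 := by
  have h0 : ∑ i, ((Module.finBasis K M).coord i⌋(ι K (Module.finBasis K M i) * x)) = 0 := by
    refine Finset.sum_eq_zero fun i _ => ?_
    rw [h, map_zero]
  rw [coeuler_sum, eulerOp_on_power k x hx, sub_eq_zero] at h0
  have hne : (Module.finrank K M : K) - (k : K) ≠ 0 := by
    rw [sub_ne_zero]
    exact fun hc => hk (Nat.cast_injective hc).symm
  have : ((Module.finrank K M : K) - (k : K)) • x = 0 := by
    rw [sub_smul, h0, sub_self]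
  exact (smul_eq_zero.mp this).resolve_left hne

/-- Euler nondegeneracy: an element of `⋀^k` with `k ≠ 0` killed by all contractions vanishes. -/
lemma eq_zero_of_forall_ctr (k : ℕ) (x : ExteriorAlgebra K M) (hx : x ∈ ⋀[K]^k M)
    (hk : k ≠ 0) (h : ∀ c : Module.Dual K M, c⌋x = 0) : x = 0 := by
  have h0 : eulerOp K M x = 0 := by
    rw [eulerOp_apply]
    refine Finset.sum_eq_zero fun i _ => ?_
    rw [h, mul_zero]
  rw [eulerOp_on_power k x hx] at h0
  have hne : (k : K) ≠ 0 := Nat.cast_ne_zero.mpr hk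
  exact (smul_eq_zero.mp h0).resolve_left hne

end findim

section memb

lemma pow_mem_power (σ : ExteriorAlgebra K M) (hσ : σ ∈ ⋀[K]^2 M) (m : ℕ) :
    σ ^ m ∈ ⋀[K]^(2 * m) M := by
  show σ ^ m ∈ (LinearMap.range (ι K (M := M))) ^ (2 * m)
  rw [pow_mul]
  exact Submodule.pow_mem_pow _ hσ m

lemma ι_mul_mem_power (a : M) (k : ℕ) (x : ExteriorAlgebra K M) (hx : x ∈ ⋀[K]^k M) :
    ι K a * x ∈ ⋀[K]^(k + 1) M := by
  show ι K a * x ∈ (LinearMap.range (ι K (M := M))) ^ (k + 1)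
  rw [pow_succ']
  exact Submodule.mul_mem_mul (LinearMap.mem_range_self _ a) hx

end memb

section triple

variable [FiniteDimensional K M] [CharZero K]

lemma triple_wedge_nonzero (τ : ExteriorAlgebra K M) (k : ℕ) (hτk : τ ∈ ⋀[K]^k M)
    (hτ : τ ≠ 0) (hk1 : k ≠ Module.finrank K M) (hk2 : k + 1 ≠ Module.finrank K M)
    (hk3 : k + 2 ≠ Module.finrank K M) :
    ∃ β γ δ : M, ι K β * (ι K γ * (ι K δ * τ)) ≠ 0 := by
  by_contra hz
  push_neg at hz
  have h2 : ∀ γ δ : M, ι K γ * (ι K δ * τ) = 0 := by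
    intro γ δ
    exact eq_zero_of_forall_ι_mul (k + 2) _
      (by rw [show k + 2 = (k + 1) + 1 by omega]
          exact ι_mul_mem_power _ _ _ (ι_mul_mem_power _ _ _ hτk)) hk3 (fun β => hz β γ δ)
  have h3 : ∀ δ : M, ι K δ * τ = 0 := by
    intro δ
    exact eq_zero_of_forall_ι_mul (k + 1) _ (ι_mul_mem_power _ _ _ hτk) hk2 (fun γ => h2 γ δ)
  exact hτ (eq_zero_of_forall_ι_mul k τ hτk hk1 h3)

end triple

section powbot

open scoped Pointwise

variable [FiniteDimensional K M]

lemma mem_map_pow_eq_zero (N : Submodule K M) (m : ℕ) (hm : Module.finrank K ↥N < m)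
    (x : ExteriorAlgebra K M) (hx : x ∈ (Submodule.map (ι K) N) ^ m) : x = 0 := by
  rw [Submodule.pow_eq_span_pow_set] at hx
  have hsub : ((Submodule.map (ι K) N : Set (ExteriorAlgebra K M)) ^ m) ⊆ {(0 : ExteriorAlgebra K M)} := by
    intro y hy
    rw [Set.mem_pow] at hy
    obtain ⟨f, hf⟩ := hy
    have hw : ∀ i, ∃ w : M, w ∈ N ∧ ι K w = (f i : ExteriorAlgebra K M) := by
      intro i
      have := (f i).2
      obtain ⟨w, hwN, hwe⟩ := this
      exact ⟨w, hwN, hwe⟩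
    choose w hwN hwι using hw
    have hfun : (fun i => ι K (w i)) = (fun i => ((f i : ExteriorAlgebra K M))) := funext hwι
    have hy' : y = ιMulti K m w := by
      rw [ιMulti_apply, hfun, hf]
    have hdep : ¬ LinearIndependent K w := by
      intro hLI
      have hw' : LinearIndependent K (fun i => (⟨w i, hwN i⟩ : N)) := by
        have : w = N.subtype ∘ (fun i => (⟨w i, hwN i⟩ : N)) := rfl
        rw [this] at hLI
        exact LinearIndependent.of_comp N.subtype hLI
      have := LinearIndependent.fintype_card_le_finrank hw'
      simp only [Fintype.card_fin] at this
      omega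
    rw [Set.mem_singleton_iff, hy']
    exact AlternatingMap.map_linearDependent (ιMulti K m) w hdep
  have : x ∈ Submodule.span K {(0 : ExteriorAlgebra K M)} :=
    Submodule.span_mono hsub hx
  simpa using this

end powbot

section key

variable [CharZero K] [FiniteDimensional K M]

theorem key (n : ℕ) (hn : 2 ≤ n) (hD : Module.finrank K M = 2 * n - 1)
    (σ : ExteriorAlgebra K M) (hσ2 : σ ∈ ⋀[K]^2 M)
    (hr1 : σ ^ (n - 2) ≠ 0) (hr2 : σ ^ (n - 1) = 0)
    (α₀ α₁ : M)
    (h0 : ι K α₀ * σ ^ (n - 2) ≠ 0)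
    (h1 : ι K α₁ * σ ^ (n - 2) ≠ 0)
    (h01 : ι K α₁ * (ι K α₀ * σ ^ (n - 2)) = 0) :
    ∃ B : K, B ≠ 0 ∧ ι K α₁ * σ ^ (n - 2) = B • (ι K α₀ * σ ^ (n - 2)) := by
  have hσ : σ ∈ LinearMap.range (ι K (M := M)) * LinearMap.range (ι K (M := M)) :=
    (mem_sq_iff σ).mp hσ2
  set τ : ExteriorAlgebra K M := σ ^ (n - 2) with hτdef
  set W : Submodule K M :=
    LinearMap.ker ((LinearMap.mulRight K τ).comp (ι K)) with hWdef
  have memW : ∀ x : M, x ∈ W ↔ ι K x * τ = 0 := by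
    intro x
    rw [hWdef, LinearMap.mem_ker, LinearMap.comp_apply, LinearMap.mulRight_apply]
  -- every contraction of σ lies (via ι) in W
  have hs1 : ∀ c : Module.Dual K M, ∃ w, w ∈ W ∧ ι K w = c⌋σ := by
    intro c
    obtain ⟨w, hw⟩ := ctr_sq_mem hσ c
    refine ⟨w, ?_, hw⟩
    rw [memW, hw]
    have hpow := ctr_sq_pow hσ c (n - 2)
    rw [show n - 2 + 1 = n - 1 by omega, hr2, map_zero] at hpow
    have h' : ((n - 1 : ℕ) : K) • ((c⌋σ) * τ) = 0 := by
      rw [Nat.cast_smul_eq_nsmul]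
      exact hpow.symm
    exact (smul_eq_zero.mp h').resolve_left (Nat.cast_ne_zero.mpr (by omega))
  -- a dual functional vanishing on W contracts σ to zero
  have hs3 : ∀ d : Module.Dual K M, (∀ w ∈ W, d w = 0) → d⌋σ = 0 := by
    intro d hd
    obtain ⟨w, hwW, hw⟩ := hs1 d
    have hw0 : w = 0 := by
      rw [← Module.forall_dual_apply_eq_zero_iff K]
      intro c
      obtain ⟨w', hw'W, hw'⟩ := hs1 c
      have hcw : algebraMap K (ExteriorAlgebra K M) (c w) = 0 := by
        rw [Algebra.algebraMap_eq_smul_one, ← ctr_ι, hw, ctr_antisymm hσ, ← hw', ctr_ι,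
          hd w' hw'W]
        simp
      exact (ExteriorAlgebra.algebraMap_eq_zero_iff M (c w)).mp hcw
    rw [← hw, hw0, map_zero]
  -- projection onto W
  obtain ⟨Cc, hCc⟩ := Submodule.exists_isCompl W
  set π : M →ₗ[K] M := W.subtype ∘ₗ (W.linearProjOfIsCompl Cc hCc) with hπdef
  have hπW : ∀ x : M, π x ∈ W := fun x => (W.linearProjOfIsCompl Cc hCc x).2
  have hπid : ∀ w, w ∈ W → π w = w := by
    intro w hw
    have h := Submodule.linearProjOfIsCompl_apply_left hCc ⟨w, hw⟩
    rw [hπdef, LinearMap.comp_apply]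
    rw [show w = ((⟨w, hw⟩ : W) : M) from rfl]
    exact congrArg W.subtype h
  have hs6 : ∀ d : Module.Dual K M, (d.comp π)⌋σ = d⌋σ := by
    intro d
    have hker : ∀ w ∈ W, (d - d.comp π) w = 0 := by
      intro w hw
      rw [LinearMap.sub_apply, LinearMap.comp_apply, hπid w hw, sub_self]
    have h := hs3 (d - d.comp π) hker
    have h2 : (d - d.comp π)⌋σ = (d⌋σ) - ((d.comp π)⌋σ) := by
      rw [map_sub, LinearMap.sub_apply]
    rw [h2, sub_eq_zero] at h
    exact h.symm
  have hdouble : ∀ (c d : Module.Dual K M) (u v : M),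
      c⌋(d⌋(ι K u * ι K v)) = (d u * c v - d v * c u) • (1 : ExteriorAlgebra K M) := by
    intro c d u v
    rw [ctr_ι_ι, map_sub, map_smul, map_smul, ctr_ι, ctr_ι, smul_smul, smul_smul, ← sub_smul]
  have hmapmem : ExteriorAlgebra.map π σ ∈
      LinearMap.range (ι K (M := M)) * LinearMap.range (ι K (M := M)) := by
    refine Submodule.mul_induction_on
      (C := fun s => ExteriorAlgebra.map π s ∈
        LinearMap.range (ι K (M := M)) * LinearMap.range (ι K (M := M))) hσ ?_ ?_
    · rintro x ⟨u, rfl⟩ y ⟨v, rfl⟩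
      rw [map_mul, ExteriorAlgebra.map_apply_ι, ExteriorAlgebra.map_apply_ι]
      exact Submodule.mul_mem_mul (LinearMap.mem_range_self _ _) (LinearMap.mem_range_self _ _)
    · intro a b iha ihb
      rw [map_add]
      exact add_mem iha ihb
  have hs5 : ∀ c d : Module.Dual K M,
      c⌋(d⌋(ExteriorAlgebra.map π σ)) = (c.comp π)⌋((d.comp π)⌋σ) := by
    intro c d
    refine Submodule.mul_induction_on
      (C := fun s => c⌋(d⌋(ExteriorAlgebra.map π s)) = (c.comp π)⌋((d.comp π)⌋s)) hσ ?_ ?_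
    · rintro x ⟨u, rfl⟩ y ⟨v, rfl⟩
      rw [map_mul, ExteriorAlgebra.map_apply_ι, ExteriorAlgebra.map_apply_ι, hdouble, hdouble]
      rfl
    · intro a b iha ihb
      rw [map_add, map_add, map_add, map_add, map_add, iha, ihb]
  have hs7 : ∀ d c : Module.Dual K M,
      c⌋(d⌋(ExteriorAlgebra.map π σ)) = c⌋(d⌋σ) := by
    intro d c
    rw [hs5 c d, hs6 d]
    obtain ⟨w, hwW, hw⟩ := hs1 d
    rw [← hw, ctr_ι, ctr_ι]
    congr 1
    rw [LinearMap.comp_apply, hπid w hwW]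
  have hs8 : ExteriorAlgebra.map π σ = σ := by
    have hsubmem : ExteriorAlgebra.map π σ - σ ∈
        LinearMap.range (ι K (M := M)) * LinearMap.range (ι K (M := M)) :=
      sub_mem hmapmem hσ
    have hctr : ∀ d : Module.Dual K M, d⌋(ExteriorAlgebra.map π σ - σ) = 0 := by
      intro d
      obtain ⟨m, hm⟩ := ctr_sq_mem hsubmem d
      have hm0 : m = 0 := by
        rw [← Module.forall_dual_apply_eq_zero_iff K]
        intro c
        have hcm : algebraMap K (ExteriorAlgebra K M) (c m) = 0 := by
          rw [Algebra.algebraMap_eq_smul_one, ← ctr_ι, hm, map_sub, map_sub, hs7 d c,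
            sub_self]
        exact (ExteriorAlgebra.algebraMap_eq_zero_iff M (c m)).mp hcm
      rw [← hm, hm0, map_zero]
    have hmem2 : ExteriorAlgebra.map π σ - σ ∈ ⋀[K]^2 M :=
      (mem_sq_iff _).mpr hsubmem
    have := eq_zero_of_forall_ctr 2 _ hmem2 (by omega) hctr
    rw [sub_eq_zero] at this
    exact this
  -- σ lives in Λ² of W
  set T : Submodule K (ExteriorAlgebra K M) := Submodule.map (ι K) W with hTdef
  have hσT : σ ∈ T ^ 2 := by
    rw [pow_two, ← hs8]
    refine Submodule.mul_induction_on
      (C := fun s => ExteriorAlgebra.map π s ∈ T * T) hσ ?_ ?_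
    · rintro x ⟨u, rfl⟩ y ⟨v, rfl⟩
      rw [map_mul, ExteriorAlgebra.map_apply_ι, ExteriorAlgebra.map_apply_ι]
      exact Submodule.mul_mem_mul ⟨π u, hπW u, rfl⟩ ⟨π v, hπW v, rfl⟩
    · intro a b iha ihb
      rw [map_add]
      exact add_mem iha ihb
  -- rank bound
  have hrankW : 2 * n - 4 ≤ Module.finrank K W := by
    by_contra hlt
    push_neg at hlt
    have hτT : τ ∈ T ^ (2 * (n - 2)) := by
      rw [pow_mul]
      exact Submodule.pow_mem_pow _ hσT (n - 2)
    exact hr1 (mem_map_pow_eq_zero W (2 * (n - 2)) (by omega) τ hτT)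
  have hα₀W : α₀ ∉ W := fun h => h0 ((memW α₀).mp h)
  -- main claim
  have hkey : α₁ ∈ W ⊔ (K ∙ α₀) := by
    by_contra hcl
    have hWlt1 : W < W ⊔ (K ∙ α₀) := by
      refine lt_of_le_of_ne le_sup_left (fun he => hα₀W ?_)
      rw [he]
      exact Submodule.mem_sup_right (Submodule.mem_span_singleton_self α₀)
    have hlt2 : (W ⊔ (K ∙ α₀)) < (W ⊔ (K ∙ α₀)) ⊔ (K ∙ α₁) := by
      refine lt_of_le_of_ne le_sup_left (fun he => hcl ?_)
      rw [he]
      exact Submodule.mem_sup_right (Submodule.mem_span_singleton_self α₁)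
    set W2 := (W ⊔ (K ∙ α₀)) ⊔ (K ∙ α₁) with hW2def
    have i1 := Submodule.finrank_lt_finrank_of_lt hWlt1
    have i2 := Submodule.finrank_lt_finrank_of_lt hlt2
    have hfr2 : 2 * n - 2 ≤ Module.finrank K W2 := by omega
    have hε : ∃ ε : M, W2 ⊔ (K ∙ ε) = ⊤ := by
      by_cases htop : W2 = ⊤
      · exact ⟨0, by simp [htop, Submodule.span_zero_singleton]⟩
      · obtain ⟨x, hx⟩ : ∃ x : M, x ∉ W2 := by
          by_contra h
          push_neg at h
          exact htop (Submodule.eq_top_iff'.mpr h)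
        refine ⟨x, ?_⟩
        have hlt : W2 < W2 ⊔ (K ∙ x) := by
          refine lt_of_le_of_ne le_sup_left (fun he => hx ?_)
          rw [he]
          exact Submodule.mem_sup_right (Submodule.mem_span_singleton_self x)
        have i3 := Submodule.finrank_lt_finrank_of_lt hlt
        have hle := Submodule.finrank_le (W2 ⊔ (K ∙ x))
        apply Submodule.eq_top_of_finrank_eq
        omega
    obtain ⟨ε, hεtop⟩ := hε
    have hdec : ∀ x : M, ∃ (w : M) (c₀ c₁ c₂ : K), w ∈ W ∧
        x = w + c₀ • α₀ + c₁ • α₁ + c₂ • ε := by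
      intro x
      have hx : x ∈ W2 ⊔ (K ∙ ε) := by rw [hεtop]; exact Submodule.mem_top
      rw [Submodule.mem_sup] at hx
      obtain ⟨y, hy, z, hz, rfl⟩ := hx
      rw [hW2def, Submodule.mem_sup] at hy
      obtain ⟨y', hy', z', hz', rfl⟩ := hy
      rw [Submodule.mem_sup] at hy'
      obtain ⟨w, hw, z'', hz'', rfl⟩ := hy'
      rw [Submodule.mem_span_singleton] at hz hz' hz''
      obtain ⟨c₂, rfl⟩ := hz
      obtain ⟨c₁, rfl⟩ := hz'
      obtain ⟨c₀, rfl⟩ := hz''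
      exact ⟨w, c₀, c₁, c₂, hw, rfl⟩
    have hWkill : ∀ w ∈ W, ι K w * τ = 0 := fun w hw => (memW w).mp hw
    have h01' : ι K α₀ * (ι K α₁ * τ) = 0 := by
      rw [ι_mul_swap, h01, neg_zero]
    have hW1 : ∀ w ∈ W, ∀ x : M, ι K w * (ι K x * τ) = 0 := by
      intro w hw x
      rw [ι_mul_swap, hWkill w hw, mul_zero, neg_zero]
    have hW2k : ∀ w ∈ W, ∀ x y : M, ι K w * (ι K x * (ι K y * τ)) = 0 := by
      intro w hw x y
      rw [ι_mul_swap, hW1 w hw y, mul_zero, neg_zero]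
    -- the four second-level generators, killed by every ι β
    have hg₁ : ∀ β : M, ι K β * (ι K ε * (ι K α₀ * τ)) = 0 := by
      intro β
      obtain ⟨w, c₀, c₁, c₂, hwW, rfl⟩ := hdec β
      rw [map_add, map_add, map_add, add_mul, add_mul, add_mul, hW2k w hwW,
        map_smul, map_smul, map_smul, smul_mul_assoc, smul_mul_assoc, smul_mul_assoc]
      rw [show ι K α₀ * (ι K ε * (ι K α₀ * τ)) = 0 by
            rw [ι_mul_swap, ι_mul_sq, mul_zero, neg_zero]]
      rw [show ι K α₁ * (ι K ε * (ι K α₀ * τ)) = 0 by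
            rw [ι_mul_swap, h01, mul_zero, neg_zero]]
      rw [show ι K ε * (ι K ε * (ι K α₀ * τ)) = 0 from ι_mul_sq ε _]
      simp
    have hg₂ : ∀ β : M, ι K β * (ι K ε * (ι K α₁ * τ)) = 0 := by
      intro β
      obtain ⟨w, c₀, c₁, c₂, hwW, rfl⟩ := hdec β
      rw [map_add, map_add, map_add, add_mul, add_mul, add_mul, hW2k w hwW,
        map_smul, map_smul, map_smul, smul_mul_assoc, smul_mul_assoc, smul_mul_assoc]
      rw [show ι K α₀ * (ι K ε * (ι K α₁ * τ)) = 0 by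
            rw [ι_mul_swap, h01', mul_zero, neg_zero]]
      rw [show ι K α₁ * (ι K ε * (ι K α₁ * τ)) = 0 by
            rw [ι_mul_swap, ι_mul_sq, mul_zero, neg_zero]]
      rw [show ι K ε * (ι K ε * (ι K α₁ * τ)) = 0 from ι_mul_sq ε _]
      simp
    have hg₃ : ∀ β : M, ι K β * (ι K α₀ * (ι K ε * τ)) = 0 := by
      intro β
      obtain ⟨w, c₀, c₁, c₂, hwW, rfl⟩ := hdec β
      rw [map_add, map_add, map_add, add_mul, add_mul, add_mul, hW2k w hwW,
        map_smul, map_smul, map_smul, smul_mul_assoc, smul_mul_assoc, smul_mul_assoc]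
      rw [show ι K α₀ * (ι K α₀ * (ι K ε * τ)) = 0 from ι_mul_sq α₀ _]
      rw [show ι K α₁ * (ι K α₀ * (ι K ε * τ)) = 0 by
            rw [ι_mul_swap α₀ ε τ, mul_neg, ι_mul_swap α₁ ε, h01, mul_zero, neg_zero, neg_zero]]
      rw [show ι K ε * (ι K α₀ * (ι K ε * τ)) = 0 by
            rw [ι_mul_swap, ι_mul_sq, mul_zero, neg_zero]]
      simp
    have hg₄ : ∀ β : M, ι K β * (ι K α₁ * (ι K ε * τ)) = 0 := by
      intro β
      obtain ⟨w, c₀, c₁, c₂, hwW, rfl⟩ := hdec β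
      rw [map_add, map_add, map_add, add_mul, add_mul, add_mul, hW2k w hwW,
        map_smul, map_smul, map_smul, smul_mul_assoc, smul_mul_assoc, smul_mul_assoc]
      rw [show ι K α₀ * (ι K α₁ * (ι K ε * τ)) = 0 by
            rw [ι_mul_swap α₁ ε τ, mul_neg, ι_mul_swap α₀ ε, h01', mul_zero, neg_zero, neg_zero]]
      rw [show ι K α₁ * (ι K α₁ * (ι K ε * τ)) = 0 from ι_mul_sq α₁ _]
      rw [show ι K ε * (ι K α₁ * (ι K ε * τ)) = 0 by
            rw [ι_mul_swap, ι_mul_sq, mul_zero, neg_zero]]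
      simp
    -- first level
    set S₁ : Submodule K (ExteriorAlgebra K M) :=
      Submodule.span K {ι K α₀ * τ, ι K α₁ * τ, ι K ε * τ} with hS₁def
    have hZ1 : ∀ δ : M, ι K δ * τ ∈ S₁ := by
      intro δ
      obtain ⟨w, c₀, c₁, c₂, hwW, rfl⟩ := hdec δ
      rw [map_add, map_add, map_add, add_mul, add_mul, add_mul, hWkill w hwW, zero_add,
        map_smul, map_smul, map_smul, smul_mul_assoc, smul_mul_assoc, smul_mul_assoc]
      refine add_mem (add_mem ?_ ?_) ?_ <;>
        refine Submodule.smul_mem _ _ (Submodule.subset_span ?_) <;> simp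
    set S₂ : Submodule K (ExteriorAlgebra K M) :=
      Submodule.span K {ι K ε * (ι K α₀ * τ), ι K ε * (ι K α₁ * τ),
        ι K α₀ * (ι K ε * τ), ι K α₁ * (ι K ε * τ)} with hS₂def
    have hZ2a : ∀ γ : M, ι K γ * (ι K α₀ * τ) ∈ S₂ := by
      intro γ
      obtain ⟨w, c₀, c₁, c₂, hwW, rfl⟩ := hdec γ
      rw [map_add, map_add, map_add, add_mul, add_mul, add_mul, hW1 w hwW, zero_add,
        map_smul, map_smul, map_smul, smul_mul_assoc, smul_mul_assoc, smul_mul_assoc,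
        ι_mul_sq, h01, smul_zero, smul_zero, zero_add, zero_add]
      exact Submodule.smul_mem _ _ (Submodule.subset_span (by simp))
    have hZ2b : ∀ γ : M, ι K γ * (ι K α₁ * τ) ∈ S₂ := by
      intro γ
      obtain ⟨w, c₀, c₁, c₂, hwW, rfl⟩ := hdec γ
      rw [map_add, map_add, map_add, add_mul, add_mul, add_mul, hW1 w hwW, zero_add,
        map_smul, map_smul, map_smul, smul_mul_assoc, smul_mul_assoc, smul_mul_assoc,
        ι_mul_sq, h01', smul_zero, smul_zero, zero_add, zero_add]
      exact Submodule.smul_mem _ _ (Submodule.subset_span (by simp))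
    have hZ2c : ∀ γ : M, ι K γ * (ι K ε * τ) ∈ S₂ := by
      intro γ
      obtain ⟨w, c₀, c₁, c₂, hwW, rfl⟩ := hdec γ
      rw [map_add, map_add, map_add, add_mul, add_mul, add_mul, hW1 w hwW, zero_add,
        map_smul, map_smul, map_smul, smul_mul_assoc, smul_mul_assoc, smul_mul_assoc,
        ι_mul_sq, smul_zero, add_zero]
      refine add_mem ?_ ?_ <;>
        refine Submodule.smul_mem _ _ (Submodule.subset_span ?_) <;> simp
    have hzero : ∀ β γ δ : M, ι K β * (ι K γ * (ι K δ * τ)) = 0 := by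
      intro β γ δ
      have hmem₁ := hZ1 δ
      have hS₂zero : ∀ z ∈ S₂, ι K β * z = 0 := by
        intro z hz
        induction hz using Submodule.span_induction with
        | mem y hy =>
            rcases hy with h | h | h | h
            · rw [h]; exact hg₁ β
            · rw [h]; exact hg₂ β
            · rw [h]; exact hg₃ β
            · rw [h]; exact hg₄ β
        | zero => rw [mul_zero]
        | add y z _ _ ihy ihz => rw [mul_add, ihy, ihz, add_zero]
        | smul c y _ ihy => rw [mul_smul_comm, ihy, smul_zero]
      have hS₁zero : ∀ y ∈ S₁, ι K β * (ι K γ * y) = 0 := by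
        intro y hy
        induction hy using Submodule.span_induction with
        | mem y hy =>
            rcases hy with h | h | h
            · rw [h]; exact hS₂zero _ (hZ2a γ)
            · rw [h]; exact hS₂zero _ (hZ2b γ)
            · rw [h]; exact hS₂zero _ (hZ2c γ)
        | zero => rw [mul_zero, mul_zero]
        | add y z _ _ ihy ihz => rw [mul_add, mul_add, ihy, ihz, add_zero]
        | smul c y _ ihy => rw [mul_smul_comm, mul_smul_comm, ihy, smul_zero]
      exact hS₁zero _ hmem₁
    have hτmem : τ ∈ ⋀[K]^(2 * (n - 2)) M := pow_mem_power σ hσ2 (n - 2)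
    obtain ⟨β, γ, δ, hne⟩ := triple_wedge_nonzero τ (2 * (n - 2)) hτmem hr1
      (by rw [hD]; omega) (by rw [hD]; omega) (by rw [hD]; omega)
    exact hne (hzero β γ δ)
  -- extract the scalar
  rw [Submodule.mem_sup] at hkey
  obtain ⟨w, hw, z, hz, hsum⟩ := hkey
  rw [Submodule.mem_span_singleton] at hz
  obtain ⟨B, rfl⟩ := hz
  have hexp : ι K α₁ * τ = B • (ι K α₀ * τ) := by
    rw [← hsum, map_add, add_mul, (memW w).mp hw, map_smul, smul_mul_assoc, zero_add]
  refine ⟨B, ?_, hexp⟩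
  rintro rfl
  exact h1 (by rw [hexp, zero_smul])

end key

end Stmt3Aux

open ExteriorAlgebra in
/-- a 2-form σ of rank 2n−4 on a (2n−1)-dimensional space over a field of
characteristic 0, and covectors α₀, α₁ with αᵢ ∧ σ^{n-2} ≠ 0 and α₁ ∧ α₀ ∧ σ^{n-2} = 0;
then α₁ ∧ σ^{n-2} = B • (α₀ ∧ σ^{n-2}) for some nonzero scalar B. -/
theorem stmt_3 {K : Type*} [Field K] [CharZero K] {V : Type*} [AddCommGroup V] [Module K V]
    [FiniteDimensional K V] (n : ℕ) (hn : 2 ≤ n)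
    (hdim : Module.finrank K V = 2 * n - 1)
    (σ : ExteriorAlgebra K (Module.Dual K V)) (hσ : σ ∈ ⋀[K]^2 (Module.Dual K V))
    (hrank1 : σ ^ (n - 2) ≠ 0) (hrank2 : σ ^ (n - 1) = 0)
    (α₀ α₁ : Module.Dual K V)
    (h0 : ι K α₀ * σ ^ (n - 2) ≠ 0)
    (h1 : ι K α₁ * σ ^ (n - 2) ≠ 0)
    (h01 : ι K α₁ * (ι K α₀ * σ ^ (n - 2)) = 0) :
    ∃ B : K, B ≠ 0 ∧ ι K α₁ * σ ^ (n - 2) = B • (ι K α₀ * σ ^ (n - 2)) := by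
  have hD : Module.finrank K (Module.Dual K V) = 2 * n - 1 := by
    rw [Subspace.dual_finrank_eq, hdim]
  exact Stmt3Aux.key n hn hD σ hσ hrank1 hrank2 α₀ α₁ h0 h1 h01
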